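/- Let (B,X,⊲,⊲',*) be a shadow biquandle such that X is strongly connected, let [x,y,z] = y*((x↘z) ⊲' (x↘y)) be the corresponding horizontal-tribracket, and let A be an abelian group. Then for every integer n, the n-th shadow biquandle homology group H_n^SB(B,X;A) is isomorphic to the n-th local biquandle homology group H_n^LB(X;A), and the n-th shadow biquandle cohomology group H^n_SB(B,X;A) is isomorphic to the n-th local biquandle cohomology group H^n_LB(X;A); these isomorphisms are induced by the chain map determined on generators by μ_n(x,a₁,…,a_n) = (x, x*a₁,…,x*a_n). -/

import Mathlib

/-- A biquandle: a set `B` with two binary operations `ut` (the under operation `⊲`)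
and `ot` (the over operation `⊲'`) satisfying the biquandle axioms. -/
structure Biquandle (B : Type*) where
  ut : B → B → B
  ot : B → B → B
  diag : ∀ a, ut a a = ot a a
  ut_bij : ∀ b, Function.Bijective fun a => ut a b
  ot_bij : ∀ b, Function.Bijective fun a => ot a b
  S_bij : Function.Bijective fun p : B × B => (ot p.2 p.1, ut p.1 p.2)
  ex1 : ∀ a b c, ut (ut a b) (ut c b) = ut (ut a c) (ot b c)
  ex2 : ∀ a b c, ot (ut a b) (ut c b) = ut (ot a c) (ot b c)
  ex3 : ∀ a b c, ot (ot a b) (ot c b) = ot (ot a c) (ut b c)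

/-- The inverse `a ⊲⁻¹ b` of the bijection `·⊲b` of a biquandle. -/
noncomputable def Biquandle.utInv {B : Type*} (bq : Biquandle B) (a b : B) : B :=
  (Equiv.ofBijective _ (bq.ut_bij b)).symm a

/-- The inverse `a ⊲'⁻¹ b` of the bijection `·⊲'b` of a biquandle. -/
noncomputable def Biquandle.otInv {B : Type*} (bq : Biquandle B) (a b : B) : B :=
  (Equiv.ofBijective _ (bq.ot_bij b)).symm a

/-- A `B`-set for a biquandle `bq` on `B`: a set `X` with an action `act = *`
such that each `·*a` is a bijection of `X` and `(x*a)*(b⊲'a) = (x*b)*(a⊲b)`. -/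
structure BSet {B : Type*} (bq : Biquandle B) (X : Type*) where
  act : X → B → X
  act_bij : ∀ a, Function.Bijective fun x => act x a
  compat : ∀ x a b, act (act x a) (bq.ot b a) = act (act x b) (bq.ut a b)

/-- The inverse `x *⁻¹ a` of the bijection `·*a` of a `B`-set. -/
noncomputable def BSet.actInv {B : Type*} {bq : Biquandle B} {X : Type*}
    (bs : BSet bq X) (x : X) (a : B) : X :=
  (Equiv.ofBijective _ (bs.act_bij a)).symm x

/-- A `B`-set is strongly connected if for each `x` the map `a ↦ x*a` is a bijection `B → X`. -/
def BSet.StronglyConnected {B : Type*} {bq : Biquandle B} {X : Type*} (bs : BSet bq X) : Prop :=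
  ∀ x, Function.Bijective fun a => bs.act x a

/-- For a strongly connected `B`-set, `x ↘ y` is the unique `a ∈ B` with `x*a = y`. -/
noncomputable def BSet.sd {B : Type*} {bq : Biquandle B} {X : Type*} (bs : BSet bq X)
    (h : bs.StronglyConnected) (x y : X) : B :=
  (Equiv.ofBijective _ (h x)).symm y

/-- The corresponding horizontal-tribracket of a shadow biquandle with strongly connected
`B`-set: `[x,y,z] = y*((x↘z) ⊲' (x↘y))`. -/
noncomputable def BSet.tribr {B X : Type*} {bq : Biquandle B} (bs : BSet bq X)
    (h : bs.StronglyConnected) (x y z : X) : X :=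
  bs.act y (bq.ot (bs.sd h x z) (bs.sd h x y))

open scoped TensorProduct

/-! ### Chain groups

For `n : ℤ`, the generating set of the `n`-th shadow biquandle chain group: it is
`X × Bⁿ` for `n ≥ 1` and empty for `n < 1` (so the chain group is `0` for `n < 1`). -/

/-- Generators of the shadow biquandle chain complex in degree `n`. -/
def GSB (B X : Type) (n : ℤ) : Type := X × (Fin n.toNat → B) × PLift (1 ≤ n)

/-- Generators of the local biquandle chain complex in degree `n`
(pairs `((x,y₁),…,(x,y_n))` are encoded as `(x, (y₁,…,y_n))`). -/
def GLB (X : Type) (n : ℤ) : Type := X × (Fin n.toNat → X) × PLift (1 ≤ n)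

/-- Deletion of the `i`-th entry of a tuple. -/
def delZ {α : Type} {n m : ℤ} (hm : m = n - 1) (i : Fin n.toNat) (f : Fin n.toNat → α) :
    Fin m.toNat → α :=
  fun j =>
    if h : (j : ℕ) < (i : ℕ) then f ⟨j, by have := i.isLt; omega⟩
    else f ⟨(j : ℕ) + 1, by have := j.isLt; have := i.isLt; omega⟩

/-- The twisted tuple `(a₁⊲a_i,…,a_{i-1}⊲a_i, a_{i+1}⊲'a_i,…,a_n⊲'a_i)` of the shadow
biquandle boundary. -/
def sbTwistZ {B : Type} (bq : Biquandle B) {n m : ℤ} (hm : m = n - 1)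
    (i : Fin n.toNat) (f : Fin n.toNat → B) : Fin m.toNat → B :=
  fun j =>
    if h : (j : ℕ) < (i : ℕ) then bq.ut (f ⟨j, by have := i.isLt; omega⟩) (f i)
    else bq.ot (f ⟨(j : ℕ) + 1, by have := j.isLt; have := i.isLt; omega⟩) (f i)

/-- The twisted tuple `([x,y₁,y_i],…,[x,y_{i-1},y_i],[x,y_i,y_{i+1}],…,[x,y_i,y_n])` of
the local biquandle boundary. -/
def lbTwistZ {X : Type} (tb : X → X → X → X) {n m : ℤ} (hm : m = n - 1)
    (x : X) (i : Fin n.toNat) (f : Fin n.toNat → X) : Fin m.toNat → X :=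
  fun j =>
    if h : (j : ℕ) < (i : ℕ) then tb x (f ⟨j, by have := i.isLt; omega⟩) (f i)
    else tb x (f i) (f ⟨(j : ℕ) + 1, by have := j.isLt; have := i.isLt; omega⟩)

/-- The shadow biquandle boundary `∂_n^sb : C_n^sb → C_{n-1}^sb` (zero unless `n ≥ 2`). -/
noncomputable def dSB {B X : Type} (bq : Biquandle B) (bs : BSet bq X) (n m : ℤ)
    (hm : m = n - 1) :
    FreeAbelianGroup (GSB B X n) →+ FreeAbelianGroup (GSB B X m) :=
  FreeAbelianGroup.lift fun g =>
    if h2 : 2 ≤ n then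
      ∑ i : Fin n.toNat, ((-1 : ℤ) ^ ((i : ℕ) + 1)) •
        (FreeAbelianGroup.of (⟨g.1, delZ hm i g.2.1, ⟨by omega⟩⟩ : GSB B X m)
          - FreeAbelianGroup.of
              (⟨bs.act g.1 (g.2.1 i), sbTwistZ bq hm i g.2.1, ⟨by omega⟩⟩ : GSB B X m))
    else 0

/-- The local biquandle boundary `∂_n^lb : C_n^lb → C_{n-1}^lb` (zero unless `n ≥ 2`),
for a ternary operation `tb`. -/
noncomputable def dLB {X : Type} (tb : X → X → X → X) (n m : ℤ) (hm : m = n - 1) :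
    FreeAbelianGroup (GLB X n) →+ FreeAbelianGroup (GLB X m) :=
  FreeAbelianGroup.lift fun g =>
    if h2 : 2 ≤ n then
      ∑ i : Fin n.toNat, ((-1 : ℤ) ^ ((i : ℕ) + 1)) •
        (FreeAbelianGroup.of (⟨g.1, delZ hm i g.2.1, ⟨by omega⟩⟩ : GLB X m)
          - FreeAbelianGroup.of
              (⟨g.2.1 i, lbTwistZ tb hm g.1 i g.2.1, ⟨by omega⟩⟩ : GLB X m))
    else 0

/-- The degenerate subgroup `D_n^sb`, generated by the generators with two equal
adjacent entries. -/
def DegSB (B X : Type) (n : ℤ) : Submodule ℤ (FreeAbelianGroup (GSB B X n)) :=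
  Submodule.span ℤ {c | ∃ g : GSB B X n, c = FreeAbelianGroup.of g ∧
    ∃ i j : Fin n.toNat, (i : ℕ) + 1 = (j : ℕ) ∧ g.2.1 i = g.2.1 j}

/-- The degenerate subgroup `D_n^lb`. -/
def DegLB (X : Type) (n : ℤ) : Submodule ℤ (FreeAbelianGroup (GLB X n)) :=
  Submodule.span ℤ {c | ∃ g : GLB X n, c = FreeAbelianGroup.of g ∧
    ∃ i j : Fin n.toNat, (i : ℕ) + 1 = (j : ℕ) ∧ g.2.1 i = g.2.1 j}

/-! ### Homology with coefficients

The chain complex with coefficients in `A` is `(C_*^sb/D_*^sb) ⊗ A`; by right exactness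
of the tensor product this quotient complex is presented as `(C_*^sb ⊗ A)` modulo the
image of `D_*^sb ⊗ A`, and its homology in degree `n` is
`{c | ∂c ∈ D_{n-1}⊗A} / (D_n⊗A + im ∂_{n+1})`. -/

/-- Shadow biquandle chains with coefficients in `A`. -/
abbrev CSBA (B X A : Type) [AddCommGroup A] (n : ℤ) : Type :=
  (FreeAbelianGroup (GSB B X n)) ⊗[ℤ] A

/-- Local biquandle chains with coefficients in `A`. -/
abbrev CLBA (X A : Type) [AddCommGroup A] (n : ℤ) : Type :=
  (FreeAbelianGroup (GLB X n)) ⊗[ℤ] A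

/-- The shadow biquandle boundary with coefficients, `∂ ⊗ id`. -/
noncomputable def dSBA {B X : Type} (bq : Biquandle B) (bs : BSet bq X)
    (A : Type) [AddCommGroup A] (n m : ℤ) (hm : m = n - 1) :
    CSBA B X A n →ₗ[ℤ] CSBA B X A m :=
  TensorProduct.map (dSB bq bs n m hm).toIntLinearMap LinearMap.id

/-- The local biquandle boundary with coefficients, `∂ ⊗ id`. -/
noncomputable def dLBA {X : Type} (tb : X → X → X → X)
    (A : Type) [AddCommGroup A] (n m : ℤ) (hm : m = n - 1) :
    CLBA X A n →ₗ[ℤ] CLBA X A m :=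
  TensorProduct.map (dLB tb n m hm).toIntLinearMap LinearMap.id

/-- The image of `D_n^sb ⊗ A` in `C_n^sb ⊗ A`. -/
def DegSBA (B X A : Type) [AddCommGroup A] (n : ℤ) : Submodule ℤ (CSBA B X A n) :=
  Submodule.span ℤ {c | ∃ d ∈ DegSB B X n, ∃ a : A, c = d ⊗ₜ[ℤ] a}

/-- The image of `D_n^lb ⊗ A` in `C_n^lb ⊗ A`. -/
def DegLBA (X A : Type) [AddCommGroup A] (n : ℤ) : Submodule ℤ (CLBA X A n) :=
  Submodule.span ℤ {c | ∃ d ∈ DegLB X n, ∃ a : A, c = d ⊗ₜ[ℤ] a}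

/-- Cycles of the quotient complex `C_*^SB ⊗ A`: chains whose boundary is degenerate. -/
noncomputable def cycSB {B X : Type} (bq : Biquandle B) (bs : BSet bq X)
    (A : Type) [AddCommGroup A] (n : ℤ) : Submodule ℤ (CSBA B X A n) :=
  (DegSBA B X A (n - 1)).comap (dSBA bq bs A n (n - 1) rfl)

/-- Boundaries of the quotient complex `C_*^SB ⊗ A` together with degenerate chains. -/
noncomputable def bdrSB {B X : Type} (bq : Biquandle B) (bs : BSet bq X)
    (A : Type) [AddCommGroup A] (n : ℤ) : Submodule ℤ (CSBA B X A n) :=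
  DegSBA B X A n ⊔ LinearMap.range (dSBA bq bs A (n + 1) n (by ring))

/-- The `n`-th shadow biquandle homology group `H_n^SB(B,X;A)` of the quotient complex
`(C_*^sb/D_*^sb) ⊗ A`. -/
noncomputable abbrev HSB {B X : Type} (bq : Biquandle B) (bs : BSet bq X)
    (A : Type) [AddCommGroup A] (n : ℤ) :=
  cycSB bq bs A n ⧸ ((bdrSB bq bs A n).comap (cycSB bq bs A n).subtype)

/-- Cycles of the quotient complex `C_*^LB ⊗ A`. -/
noncomputable def cycLB {X : Type} (tb : X → X → X → X)
    (A : Type) [AddCommGroup A] (n : ℤ) : Submodule ℤ (CLBA X A n) :=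
  (DegLBA X A (n - 1)).comap (dLBA tb A n (n - 1) rfl)

/-- Boundaries of the quotient complex `C_*^LB ⊗ A` together with degenerate chains. -/
noncomputable def bdrLB {X : Type} (tb : X → X → X → X)
    (A : Type) [AddCommGroup A] (n : ℤ) : Submodule ℤ (CLBA X A n) :=
  DegLBA X A n ⊔ LinearMap.range (dLBA tb A (n + 1) n (by ring))

/-- The `n`-th local biquandle homology group `H_n^LB(X;A)`. -/
noncomputable abbrev HLB {X : Type} (tb : X → X → X → X)
    (A : Type) [AddCommGroup A] (n : ℤ) :=
  cycLB tb A n ⧸ ((bdrLB tb A n).comap (cycLB tb A n).subtype)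

/-! ### The chain map `μ` -/

/-- The chain map `μ_n` induced by `μ_n(x,a₁,…,a_n) = (x, x*a₁, …, x*a_n)`. -/
noncomputable def muZ {B X : Type} (bq : Biquandle B) (bs : BSet bq X) (n : ℤ) :
    FreeAbelianGroup (GSB B X n) →+ FreeAbelianGroup (GLB X n) :=
  FreeAbelianGroup.lift fun g =>
    FreeAbelianGroup.of (⟨g.1, fun i => bs.act g.1 (g.2.1 i), g.2.2⟩ : GLB X n)

/-- The chain map `μ_n ⊗ id` with coefficients. -/
noncomputable def muA {B X : Type} (bq : Biquandle B) (bs : BSet bq X)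
    (A : Type) [AddCommGroup A] (n : ℤ) : CSBA B X A n →ₗ[ℤ] CLBA X A n :=
  TensorProduct.map (muZ bq bs n).toIntLinearMap LinearMap.id

/-! ### Cohomology

Cochains of the quotient complex `C_*^SB = C_*^sb/D_*^sb` with values in `A` are
homomorphisms `C_n^sb →+ A` vanishing on `D_n^sb`. -/

/-- Precomposition with a fixed homomorphism, as a homomorphism. -/
def precompHom {M N A : Type} [AddCommGroup M] [AddCommGroup N] [AddCommGroup A]
    (φ : M →+ N) : (N →+ A) →+ (M →+ A) where
  toFun f := f.comp φ
  map_zero' := rfl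
  map_add' f g := rfl

/-- Cochains on `C_n^SB`: homomorphisms vanishing on the degenerate subgroup. -/
def vanSB (B X A : Type) [AddCommGroup A] (n : ℤ) :
    AddSubgroup ((FreeAbelianGroup (GSB B X n)) →+ A) where
  carrier := {f | ∀ d ∈ DegSB B X n, f d = 0}
  zero_mem' := fun d _ => rfl
  add_mem' := by
    intro f g hf hg d hd
    simp [AddMonoidHom.add_apply, hf d hd, hg d hd]
  neg_mem' := by
    intro f hf d hd
    simp [AddMonoidHom.neg_apply, hf d hd]

/-- Cochains on `C_n^LB`. -/
def vanLB (X A : Type) [AddCommGroup A] (n : ℤ) :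
    AddSubgroup ((FreeAbelianGroup (GLB X n)) →+ A) where
  carrier := {f | ∀ d ∈ DegLB X n, f d = 0}
  zero_mem' := fun d _ => rfl
  add_mem' := by
    intro f g hf hg d hd
    simp [AddMonoidHom.add_apply, hf d hd, hg d hd]
  neg_mem' := by
    intro f hf d hd
    simp [AddMonoidHom.neg_apply, hf d hd]

/-- Shadow biquandle `n`-cocycles: cochains on `C_n^SB` killed by the coboundary
`δf = f ∘ ∂_{n+1}`. -/
noncomputable def cocySB {B X : Type} (bq : Biquandle B) (bs : BSet bq X)
    (A : Type) [AddCommGroup A] (n : ℤ) :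
    AddSubgroup ((FreeAbelianGroup (GSB B X n)) →+ A) :=
  vanSB B X A n ⊓ (precompHom (A := A) (dSB bq bs (n + 1) n (by ring))).ker

/-- Shadow biquandle `n`-coboundaries: cochains of the form `g ∘ ∂_n` for a cochain `g`
on `C_{n-1}^SB`. -/
noncomputable def cobSB {B X : Type} (bq : Biquandle B) (bs : BSet bq X)
    (A : Type) [AddCommGroup A] (n : ℤ) :
    AddSubgroup ((FreeAbelianGroup (GSB B X n)) →+ A) :=
  AddSubgroup.map (precompHom (A := A) (dSB bq bs n (n - 1) rfl)) (vanSB B X A (n - 1))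

/-- The `n`-th shadow biquandle cohomology group `H^n_SB(B,X;A)`. -/
noncomputable abbrev HcSB {B X : Type} (bq : Biquandle B) (bs : BSet bq X)
    (A : Type) [AddCommGroup A] (n : ℤ) :=
  cocySB bq bs A n ⧸ (cobSB bq bs A n).addSubgroupOf (cocySB bq bs A n)

/-- Local biquandle `n`-cocycles. -/
noncomputable def cocyLB {X : Type} (tb : X → X → X → X)
    (A : Type) [AddCommGroup A] (n : ℤ) :
    AddSubgroup ((FreeAbelianGroup (GLB X n)) →+ A) :=
  vanLB X A n ⊓ (precompHom (A := A) (dLB tb (n + 1) n (by ring))).ker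

/-- Local biquandle `n`-coboundaries. -/
noncomputable def cobLB {X : Type} (tb : X → X → X → X)
    (A : Type) [AddCommGroup A] (n : ℤ) :
    AddSubgroup ((FreeAbelianGroup (GLB X n)) →+ A) :=
  AddSubgroup.map (precompHom (A := A) (dLB tb n (n - 1) rfl)) (vanLB X A (n - 1))

/-- The `n`-th local biquandle cohomology group `H^n_LB(X;A)`. -/
noncomputable abbrev HcLB {X : Type} (tb : X → X → X → X)
    (A : Type) [AddCommGroup A] (n : ℤ) :=
  cocyLB tb A n ⧸ (cobLB tb A n).addSubgroupOf (cocyLB tb A n)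

section Aux
variable {B X : Type} {bq : Biquandle B} (bs : BSet bq X) (h : bs.StronglyConnected)

lemma act_sd (x y : X) : bs.act x (bs.sd h x y) = y :=
  (Equiv.ofBijective _ (h x)).apply_symm_apply y

lemma sd_act (x : X) (a : B) : bs.sd h x (bs.act x a) = a :=
  (Equiv.ofBijective _ (h x)).symm_apply_apply a

/-- The generator bijection `(x,a₁,…,aₙ) ↦ (x, x*a₁,…,x*aₙ)`. -/
noncomputable def eG (n : ℤ) : GSB B X n ≃ GLB X n where
  toFun g := ⟨g.1, fun i => bs.act g.1 (g.2.1 i), g.2.2⟩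
  invFun g := ⟨g.1, fun i => bs.sd h g.1 (g.2.1 i), g.2.2⟩
  left_inv g := by
    show (⟨g.1, fun i => bs.sd h g.1 (bs.act g.1 (g.2.1 i)), g.2.2⟩ : GSB B X n) = g
    obtain ⟨x, f, p⟩ := g
    simp [sd_act bs h]
  right_inv g := by
    show (⟨g.1, fun i => bs.act g.1 (bs.sd h g.1 (g.2.1 i)), g.2.2⟩ : GLB X n) = g
    obtain ⟨x, f, p⟩ := g
    simp [act_sd bs h]

noncomputable def Eab (n : ℤ) : FreeAbelianGroup (GSB B X n) ≃+ FreeAbelianGroup (GLB X n) :=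
  FreeAbelianGroup.equivOfEquiv (eG bs h n)

lemma Eab_of (n : ℤ) (g : GSB B X n) :
    Eab bs h n (FreeAbelianGroup.of g) = FreeAbelianGroup.of (eG bs h n g) :=
  FreeAbelianGroup.map_of_apply g

lemma Eab_symm_of (n : ℤ) (g : GLB X n) :
    (Eab bs h n).symm (FreeAbelianGroup.of g) = FreeAbelianGroup.of ((eG bs h n).symm g) :=
  FreeAbelianGroup.map_of_apply g

lemma muZ_eq (n : ℤ) : muZ bq bs n = (Eab bs h n).toAddMonoidHom := by
  apply FreeAbelianGroup.lift_ext _ _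
  intro g
  show FreeAbelianGroup.of _ = Eab bs h n (FreeAbelianGroup.of g)
  rw [Eab_of]
  rfl

end Aux
section Aux2
variable {B X : Type} {bq : Biquandle B} (bs : BSet bq X) (h : bs.StronglyConnected)

lemma GLB_ext {n : ℤ} (x x' : X) (f f' : Fin n.toNat → X) (p p' : PLift (1 ≤ n))
    (hx : x = x') (hf : f = f') : (⟨x, f, p⟩ : GLB X n) = ⟨x', f', p'⟩ := by
  subst hx; subst hf; cases p; cases p'; rfl

lemma del_comm {n m : ℤ} (hm : m = n - 1) (x : X) (i : Fin n.toNat) (f : Fin n.toNat → B) :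
    delZ hm i (fun j => bs.act x (f j)) = fun j => bs.act x (delZ hm i f j) := by
  funext j; unfold delZ; split <;> rfl

lemma twist_comm {n m : ℤ} (hm : m = n - 1) (x : X) (i : Fin n.toNat) (f : Fin n.toNat → B) :
    lbTwistZ (bs.tribr h) hm x i (fun j => bs.act x (f j))
      = fun j => bs.act (bs.act x (f i)) (sbTwistZ bq hm i f j) := by
  funext j; unfold lbTwistZ sbTwistZ; split
  · show bs.tribr h x (bs.act x (f _)) (bs.act x (f i)) = _
    unfold BSet.tribr
    rw [sd_act bs h, sd_act bs h]
    exact bs.compat x _ (f i)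
  · show bs.tribr h x (bs.act x (f i)) (bs.act x (f _)) = _
    unfold BSet.tribr
    rw [sd_act bs h, sd_act bs h]

lemma chainmap (n m : ℤ) (hm : m = n - 1) :
    (dLB (bs.tribr h) n m hm).comp (muZ bq bs n)
      = (muZ bq bs m).comp (dSB bq bs n m hm) := by
  apply FreeAbelianGroup.lift_ext
  intro g
  show dLB (bs.tribr h) n m hm (muZ bq bs n (FreeAbelianGroup.of g))
      = muZ bq bs m (dSB bq bs n m hm (FreeAbelianGroup.of g))
  have hmu : ∀ (g : GSB B X n), muZ bq bs n (FreeAbelianGroup.of g)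
      = FreeAbelianGroup.of (⟨g.1, fun i => bs.act g.1 (g.2.1 i), g.2.2⟩ : GLB X n) :=
    fun g => FreeAbelianGroup.lift_apply_of _ _
  have hmum : ∀ (g : GSB B X m), muZ bq bs m (FreeAbelianGroup.of g)
      = FreeAbelianGroup.of (⟨g.1, fun i => bs.act g.1 (g.2.1 i), g.2.2⟩ : GLB X m) :=
    fun g => FreeAbelianGroup.lift_apply_of _ _
  erw [hmu, show dSB bq bs n m hm (FreeAbelianGroup.of g) = _ from
    FreeAbelianGroup.lift_apply_of _ _, show dLB (bs.tribr h) n m hm (FreeAbelianGroup.of _) = _ from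
    FreeAbelianGroup.lift_apply_of _ _]
  by_cases h2 : 2 ≤ n
  · erw [dif_pos h2, dif_pos h2, map_sum]
    refine Finset.sum_congr rfl fun i _ => ?_
    erw [map_zsmul, map_sub, hmum, hmum]
    congr 1
    congr 1
    · exact congrArg _ (GLB_ext _ _ _ _ _ _ rfl (del_comm bs hm g.1 i g.2.1))
    · exact congrArg _ (GLB_ext _ _ _ _ _ _ rfl
        ((twist_comm bs h hm g.1 i g.2.1).symm ▸ rfl))
  · erw [dif_neg h2, dif_neg h2, map_zero]

end Aux2
section Aux3
variable {B X : Type} {bq : Biquandle B} (bs : BSet bq X) (h : bs.StronglyConnected)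

/-- The ℤ-linear version of `Eab`. -/
noncomputable def EL (n : ℤ) :
    FreeAbelianGroup (GSB B X n) ≃ₗ[ℤ] FreeAbelianGroup (GLB X n) :=
  (Eab bs h n).toIntLinearEquiv

lemma EL_apply (n : ℤ) (c) : EL bs h n c = Eab bs h n c := rfl
lemma EL_symm_apply (n : ℤ) (c) : (EL bs h n).symm c = (Eab bs h n).symm c := rfl

lemma eG_fst (n : ℤ) (g : GSB B X n) : (eG bs h n g).1 = g.1 := rfl
lemma eG_snd (n : ℤ) (g : GSB B X n) (i) :
    (eG bs h n g).2.1 i = bs.act g.1 (g.2.1 i) := rfl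
lemma eGsymm_fst (n : ℤ) (g : GLB X n) : ((eG bs h n).symm g).1 = g.1 := rfl
lemma eGsymm_snd (n : ℤ) (g : GLB X n) (i) :
    ((eG bs h n).symm g).2.1 i = bs.sd h g.1 (g.2.1 i) := rfl

lemma deg_map (n : ℤ) : Submodule.map (EL bs h n : _ →ₗ[ℤ] _) (DegSB B X n) = DegLB X n := by
  unfold DegSB DegLB
  rw [Submodule.map_span]
  congr 1
  ext c
  constructor
  · rintro ⟨_, ⟨g, rfl, i, j, hij, hdeg⟩, rfl⟩
    refine ⟨eG bs h n g, ?_, i, j, hij, ?_⟩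
    · exact Eab_of bs h n g
    · rw [eG_snd, eG_snd, hdeg]
  · rintro ⟨g, rfl, i, j, hij, hdeg⟩
    refine ⟨FreeAbelianGroup.of ((eG bs h n).symm g), ⟨(eG bs h n).symm g, rfl, i, j, hij, ?_⟩, ?_⟩
    · rw [eGsymm_snd, eGsymm_snd, hdeg]
    · show Eab bs h n (FreeAbelianGroup.of ((eG bs h n).symm g)) = _
      rw [Eab_of, Equiv.apply_symm_apply]

/-- The tensored linear equiv. -/
noncomputable def EA (A : Type) [AddCommGroup A] (n : ℤ) :
    CSBA B X A n ≃ₗ[ℤ] CLBA X A n :=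
  TensorProduct.congr (EL bs h n) (LinearEquiv.refl ℤ A)

lemma muA_eq (A : Type) [AddCommGroup A] (n : ℤ) :
    muA bq bs A n = (EA bs h A n).toLinearMap := by
  apply TensorProduct.ext'
  intro c a
  show TensorProduct.map _ _ _ = TensorProduct.congr _ _ _
  rw [TensorProduct.map_tmul, TensorProduct.congr_tmul]
  rw [muZ_eq bs h n]
  rfl

lemma degA_map (A : Type) [AddCommGroup A] (n : ℤ) :
    Submodule.map (EA bs h A n : _ →ₗ[ℤ] _) (DegSBA B X A n) = DegLBA X A n := by
  unfold DegSBA DegLBA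
  rw [Submodule.map_span]
  congr 1
  ext c
  constructor
  · rintro ⟨_, ⟨d, hd, a, rfl⟩, rfl⟩
    refine ⟨EL bs h n d, ?_, a, ?_⟩
    · rw [← deg_map bs h n]; exact Submodule.mem_map_of_mem hd
    · exact TensorProduct.congr_tmul _ _ _ _
  · rintro ⟨d, hd, a, rfl⟩
    rw [← deg_map bs h n] at hd
    obtain ⟨d0, hd0, rfl⟩ := hd
    exact ⟨d0 ⊗ₜ[ℤ] a, ⟨d0, hd0, a, rfl⟩, TensorProduct.congr_tmul _ _ _ _⟩

lemma chainmapA (A : Type) [AddCommGroup A] (n m : ℤ) (hm : m = n - 1) :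
    (dLBA (bs.tribr h) A n m hm).comp (muA bq bs A n)
      = (muA bq bs A m).comp (dSBA bq bs A n m hm) := by
  unfold dLBA dSBA muA
  apply TensorProduct.ext'
  intro c a
  exact congrArg (· ⊗ₜ[ℤ] a) (DFunLike.congr_fun (chainmap bs h n m hm) c)

lemma chainmapEA (A : Type) [AddCommGroup A] (n m : ℤ) (hm : m = n - 1) (c : CSBA B X A n) :
    dLBA (bs.tribr h) A n m hm (EA bs h A n c) = EA bs h A m (dSBA bq bs A n m hm c) := by
  have := DFunLike.congr_fun (chainmapA bs h A n m hm) c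
  rw [muA_eq bs h] at this
  rw [muA_eq bs h] at this
  exact this

end Aux3
section Aux4
variable {B X : Type} {bq : Biquandle B} (bs : BSet bq X) (h : bs.StronglyConnected)
variable (A : Type) [AddCommGroup A]
set_option maxHeartbeats 1000000

lemma mem_map_equiv' {M N : Type*} [AddCommGroup M] [AddCommGroup N] [Module ℤ M] [Module ℤ N]
    (e : M ≃ₗ[ℤ] N) (p : Submodule ℤ M) (x : N) :
    x ∈ Submodule.map (e : M →ₗ[ℤ] N) p ↔ e.symm x ∈ p := by
  constructor
  · rintro ⟨y, hy, rfl⟩; simpa using hy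
  · intro hx; exact ⟨e.symm x, hx, by simp⟩

lemma mem_degA_iff (n : ℤ) (c : CSBA B X A n) :
    EA bs h A n c ∈ DegLBA X A n ↔ c ∈ DegSBA B X A n := by
  rw [← degA_map bs h A n, mem_map_equiv', LinearEquiv.symm_apply_apply]

lemma cyc_map (n : ℤ) :
    Submodule.map (EA bs h A n : _ →ₗ[ℤ] _) (cycSB bq bs A n) = cycLB (bs.tribr h) A n := by
  ext w
  rw [mem_map_equiv']
  unfold cycSB cycLB
  rw [Submodule.mem_comap, Submodule.mem_comap]
  have hc := chainmapEA bs h A n (n - 1) rfl ((EA bs h A n).symm w)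
  rw [LinearEquiv.apply_symm_apply] at hc
  rw [← mem_degA_iff bs h A (n - 1) (dSBA bq bs A n (n - 1) rfl ((EA bs h A n).symm w)), ← hc]

lemma map_eq' {M N : Type*} [AddCommGroup M] [AddCommGroup N] [Module ℤ M] [Module ℤ N]
    (e : M ≃ₗ[ℤ] N) (p : Submodule ℤ M) :
    Submodule.map (e : M →ₗ[ℤ] N) p = Submodule.map e.toLinearMap p := rfl

lemma chaincomp (n m : ℤ) (hm : m = n - 1) :
    (EA bs h A m).toLinearMap.comp (dSBA bq bs A n m hm)
      = (dLBA (bs.tribr h) A n m hm).comp (EA bs h A n).toLinearMap := by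
  rw [← muA_eq bs h, ← muA_eq bs h]
  exact (chainmapA bs h A n m hm).symm

lemma bdr_map (n : ℤ) :
    Submodule.map (EA bs h A n : _ →ₗ[ℤ] _) (bdrSB bq bs A n) = bdrLB (bs.tribr h) A n := by
  unfold bdrSB bdrLB
  rw [Submodule.map_sup, degA_map]
  congr 1
  rw [map_eq', ← LinearMap.range_comp, chaincomp bs h A (n + 1) n (by ring),
    LinearMap.range_comp, LinearEquiv.range, Submodule.map_top]

/-- Restriction of `EA` to cycles. -/
noncomputable def eCyc (n : ℤ) : cycSB bq bs A n ≃ₗ[ℤ] cycLB (bs.tribr h) A n where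
  toFun c := ⟨EA bs h A n (c : CSBA B X A n), by
    rw [← cyc_map bs h A n]; exact Submodule.mem_map_of_mem c.2⟩
  invFun w := ⟨(EA bs h A n).symm (w : CLBA X A n), by
    rw [← mem_map_equiv' (EA bs h A n), cyc_map bs h A n]; exact w.2⟩
  left_inv c := Subtype.ext ((EA bs h A n).symm_apply_apply _)
  right_inv w := Subtype.ext ((EA bs h A n).apply_symm_apply _)
  map_add' c d := Subtype.ext (map_add _ _ _)
  map_smul' r c := Subtype.ext (map_smul _ _ _)

lemma eCyc_coe (n : ℤ) (c : cycSB bq bs A n) :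
    (eCyc bs h A n c : CLBA X A n) = EA bs h A n (c : CSBA B X A n) := rfl

lemma eCyc_symm_coe (n : ℤ) (w : cycLB (bs.tribr h) A n) :
    ((eCyc bs h A n).symm w : CSBA B X A n) = (EA bs h A n).symm (w : CLBA X A n) := rfl

lemma bdr_sub_map (n : ℤ) :
    Submodule.map (eCyc bs h A n : _ →ₗ[ℤ] _)
        ((bdrSB bq bs A n).comap (cycSB bq bs A n).subtype)
      = (bdrLB (bs.tribr h) A n).comap (cycLB (bs.tribr h) A n).subtype := by
  ext w
  rw [mem_map_equiv', Submodule.mem_comap, Submodule.mem_comap]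
  show ((eCyc bs h A n).symm w : CSBA B X A n) ∈ bdrSB bq bs A n ↔
    (w : CLBA X A n) ∈ bdrLB (bs.tribr h) A n
  rw [eCyc_symm_coe, ← bdr_map bs h A n, mem_map_equiv']

/-- The homology isomorphism. -/
noncomputable def eH (n : ℤ) : HSB bq bs A n ≃ₗ[ℤ] HLB (bs.tribr h) A n :=
  Submodule.Quotient.equiv _ _ (eCyc bs h A n) (bdr_sub_map bs h A n)

lemma eH_mk (n : ℤ) (c : cycSB bq bs A n) :
    eH bs h A n (Submodule.Quotient.mk c) = Submodule.Quotient.mk (eCyc bs h A n c) := by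
  rfl

end Aux4
section Aux5
variable {B X : Type} {bq : Biquandle B} (bs : BSet bq X) (h : bs.StronglyConnected)
variable (A : Type) [AddCommGroup A]

lemma chainZ_apply (n m : ℤ) (hm : m = n - 1) (c : FreeAbelianGroup (GSB B X n)) :
    dLB (bs.tribr h) n m hm (Eab bs h n c) = Eab bs h m (dSB bq bs n m hm c) := by
  have := DFunLike.congr_fun (chainmap bs h n m hm) c
  rw [muZ_eq bs h] at this
  rw [muZ_eq bs h] at this
  exact this

lemma chainZ_symm_apply (n m : ℤ) (hm : m = n - 1) (c : FreeAbelianGroup (GLB X n)) :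
    dSB bq bs n m hm ((Eab bs h n).symm c) = (Eab bs h m).symm (dLB (bs.tribr h) n m hm c) := by
  apply (Eab bs h m).injective
  rw [← chainZ_apply bs h n m hm, AddEquiv.apply_symm_apply, AddEquiv.apply_symm_apply]

lemma mem_degZ_iff (n : ℤ) (d : FreeAbelianGroup (GSB B X n)) :
    Eab bs h n d ∈ DegLB X n ↔ d ∈ DegSB B X n := by
  rw [← deg_map bs h n, mem_map_equiv']
  rw [show (EL bs h n).symm (Eab bs h n d) = d from (EL bs h n).symm_apply_apply d]

lemma mem_degZ_symm_iff (n : ℤ) (d : FreeAbelianGroup (GLB X n)) :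
    (Eab bs h n).symm d ∈ DegSB B X n ↔ d ∈ DegLB X n := by
  rw [← mem_degZ_iff bs h n, AddEquiv.apply_symm_apply]

/-- The cochain isomorphism: precomposition with `Eab⁻¹`. -/
noncomputable def Phi (n : ℤ) :
    ((FreeAbelianGroup (GSB B X n)) →+ A) ≃+ ((FreeAbelianGroup (GLB X n)) →+ A) where
  toFun f := f.comp (Eab bs h n).symm.toAddMonoidHom
  invFun f := f.comp (Eab bs h n).toAddMonoidHom
  left_inv f := AddMonoidHom.ext fun c =>
    congrArg f ((Eab bs h n).symm_apply_apply c)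
  right_inv f := AddMonoidHom.ext fun c =>
    congrArg f ((Eab bs h n).apply_symm_apply c)
  map_add' f g := rfl

lemma Phi_apply (n : ℤ) (f : (FreeAbelianGroup (GSB B X n)) →+ A) (c) :
    Phi bs h A n f c = f ((Eab bs h n).symm c) := rfl

lemma Phi_symm_apply (n : ℤ) (f : (FreeAbelianGroup (GLB X n)) →+ A) (c) :
    (Phi bs h A n).symm f c = f (Eab bs h n c) := rfl

lemma van_iff (n : ℤ) (f : (FreeAbelianGroup (GSB B X n)) →+ A) :
    Phi bs h A n f ∈ vanLB X A n ↔ f ∈ vanSB B X A n := by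
  constructor
  · intro hf d hd
    have := hf (Eab bs h n d) ((mem_degZ_iff bs h n d).mpr hd)
    rw [Phi_apply, AddEquiv.symm_apply_apply] at this
    exact this
  · intro hf d hd
    exact hf _ ((mem_degZ_symm_iff bs h n d).mpr hd)

lemma ker_iff (n : ℤ) (f : (FreeAbelianGroup (GSB B X n)) →+ A) :
    (Phi bs h A n f).comp (dLB (bs.tribr h) (n + 1) n (by ring)) = 0 ↔
      f.comp (dSB bq bs (n + 1) n (by ring)) = 0 := by
  constructor
  · intro hf
    apply AddMonoidHom.ext
    intro c
    have := DFunLike.congr_fun hf (Eab bs h (n + 1) c)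
    rw [AddMonoidHom.comp_apply, chainZ_apply bs h (n + 1) n (by ring), Phi_apply,
      AddEquiv.symm_apply_apply] at this
    exact this
  · intro hf
    apply AddMonoidHom.ext
    intro c
    have := DFunLike.congr_fun hf ((Eab bs h (n + 1)).symm c)
    rw [AddMonoidHom.comp_apply] at this
    rw [AddMonoidHom.comp_apply, Phi_apply, ← chainZ_symm_apply bs h (n + 1) n (by ring)]
    exact this

lemma cocy_iff (n : ℤ) (f : (FreeAbelianGroup (GSB B X n)) →+ A) :
    Phi bs h A n f ∈ cocyLB (bs.tribr h) A n ↔ f ∈ cocySB bq bs A n := by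
  unfold cocyLB cocySB
  rw [AddSubgroup.mem_inf, AddSubgroup.mem_inf, van_iff]
  constructor
  · rintro ⟨h1, h2⟩
    refine ⟨h1, ?_⟩
    have : (Phi bs h A n f).comp (dLB (bs.tribr h) (n + 1) n (by ring)) = 0 := h2
    exact (ker_iff bs h A n f).mp this
  · rintro ⟨h1, h2⟩
    refine ⟨h1, ?_⟩
    show (Phi bs h A n f).comp (dLB (bs.tribr h) (n + 1) n (by ring)) = 0
    exact (ker_iff bs h A n f).mpr h2

lemma cob_iff (n : ℤ) (f : (FreeAbelianGroup (GSB B X n)) →+ A) :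
    Phi bs h A n f ∈ cobLB (bs.tribr h) A n ↔ f ∈ cobSB bq bs A n := by
  unfold cobLB cobSB
  constructor
  · rintro ⟨g', hg', hfe⟩
    refine ⟨(Phi bs h A (n - 1)).symm g', (van_iff bs h A (n - 1) _).mp ?_, ?_⟩
    · rw [AddEquiv.apply_symm_apply]; exact hg'
    · apply (Phi bs h A n).injective
      rw [← hfe]
      apply AddMonoidHom.ext
      intro c
      show (Phi bs h A (n-1)).symm g' (dSB bq bs n (n - 1) rfl ((Eab bs h n).symm c))
        = g' (dLB (bs.tribr h) n (n - 1) rfl c)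
      rw [Phi_symm_apply, chainZ_symm_apply bs h n (n - 1) rfl, AddEquiv.apply_symm_apply]
  · rintro ⟨g, hg, hfe⟩
    refine ⟨Phi bs h A (n - 1) g, (van_iff bs h A (n - 1) g).mpr hg, ?_⟩
    subst hfe
    apply AddMonoidHom.ext
    intro c
    show Phi bs h A (n-1) g (dLB (bs.tribr h) n (n - 1) rfl c)
      = g (dSB bq bs n (n - 1) rfl ((Eab bs h n).symm c))
    rw [Phi_apply, chainZ_symm_apply bs h n (n - 1) rfl]

/-- Restriction of `Phi` to cocycles. -/
noncomputable def eCocy (n : ℤ) : cocySB bq bs A n ≃+ cocyLB (bs.tribr h) A n where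
  toFun f := ⟨Phi bs h A n f.1, (cocy_iff bs h A n f.1).mpr f.2⟩
  invFun f := ⟨(Phi bs h A n).symm f.1, by
    have : Phi bs h A n ((Phi bs h A n).symm f.1) ∈ cocyLB (bs.tribr h) A n := by
      rw [AddEquiv.apply_symm_apply]; exact f.2
    exact (cocy_iff bs h A n _).mp this⟩
  left_inv f := Subtype.ext ((Phi bs h A n).symm_apply_apply f.1)
  right_inv f := Subtype.ext ((Phi bs h A n).apply_symm_apply f.1)
  map_add' f g := Subtype.ext (map_add _ _ _)

lemma mem_map_addequiv' {M N : Type*} [AddCommGroup M] [AddCommGroup N]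
    (e : M ≃+ N) (p : AddSubgroup M) (x : N) :
    x ∈ AddSubgroup.map e.toAddMonoidHom p ↔ e.symm x ∈ p := by
  constructor
  · rintro ⟨y, hy, rfl⟩; simpa using hy
  · intro hx; exact ⟨e.symm x, hx, by simp⟩

lemma cob_sub_map (n : ℤ) :
    AddSubgroup.map (eCocy bs h A n).toAddMonoidHom
        ((cobSB bq bs A n).addSubgroupOf (cocySB bq bs A n))
      = (cobLB (bs.tribr h) A n).addSubgroupOf (cocyLB (bs.tribr h) A n) := by
  ext w
  rw [mem_map_addequiv']
  rw [AddSubgroup.mem_addSubgroupOf, AddSubgroup.mem_addSubgroupOf]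
  show ((Phi bs h A n).symm w.1 : _) ∈ cobSB bq bs A n ↔ (w.1 : _) ∈ cobLB (bs.tribr h) A n
  rw [← cob_iff bs h A n, AddEquiv.apply_symm_apply]

/-- The cohomology isomorphism. -/
noncomputable def eHc (n : ℤ) : HcSB bq bs A n ≃+ HcLB (bs.tribr h) A n :=
  QuotientAddGroup.congr _ _ (eCocy bs h A n) (cob_sub_map bs h A n)

lemma eHc_mk (n : ℤ) (f : cocySB bq bs A n) :
    eHc bs h A n (QuotientAddGroup.mk f) = QuotientAddGroup.mk (eCocy bs h A n f) := rfl

end Aux5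
/-- Theorem 4.4: for a shadow biquandle `(B,X)` with `X` strongly connected, with
corresponding horizontal-tribracket `[x,y,z] = y*((x↘z) ⊲' (x↘y))`, and any abelian
group `A` and any integer `n`, the chain map `μ` induces isomorphisms
`H_n^SB(B,X;A) ≅ H_n^LB(X;A)` and `H^n_SB(B,X;A) ≅ H^n_LB(X;A)`. -/
theorem shadow_biquandle_local_biquandle_homology_iso {B X : Type}
    (bq : Biquandle B) (bs : BSet bq X) (h : bs.StronglyConnected)
    (A : Type) [AddCommGroup A] (n : ℤ) :
    (∃ e : HSB bq bs A n ≃+ HLB (bs.tribr h) A n,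
      ∀ (c : cycSB bq bs A n) (c' : cycLB (bs.tribr h) A n),
        (c' : CLBA X A n) = muA bq bs A n (c : CSBA B X A n) →
          e (Submodule.Quotient.mk c) = Submodule.Quotient.mk c') ∧
    (∃ e : HcSB bq bs A n ≃+ HcLB (bs.tribr h) A n,
      ∀ (f : cocySB bq bs A n) (f' : cocyLB (bs.tribr h) A n),
        (f : FreeAbelianGroup (GSB B X n) →+ A)
            = AddMonoidHom.comp (f' : FreeAbelianGroup (GLB X n) →+ A) (muZ bq bs n) →
          e (QuotientAddGroup.mk f) = QuotientAddGroup.mk f') := by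
  constructor
  · refine ⟨(eH bs h A n).toAddEquiv, ?_⟩
    intro c c' hcc
    have hc' : c' = eCyc bs h A n c := by
      apply Subtype.ext
      rw [hcc, eCyc_coe, muA_eq bs h]
      rfl
    rw [hc']
    rfl
  · refine ⟨eHc bs h A n, ?_⟩
    intro f f' hff
    have hf' : eCocy bs h A n f = f' := by
      apply Subtype.ext
      apply AddMonoidHom.ext
      intro c
      show Phi bs h A n f.1 c = f'.1 c
      rw [Phi_apply, hff]
      have hm : muZ bq bs n ((Eab bs h n).symm c) = c := by
        rw [muZ_eq bs h]
        exact (Eab bs h n).apply_symm_apply c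
      show f'.1 (muZ bq bs n ((Eab bs h n).symm c)) = f'.1 c
      rw [hm]
    rw [← hf']
    exact eHc_mk bs h A n f
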